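/- arXiv:1709.02155 — 3 statements merged into one kernel-verified Lean document; each statement's English description precedes it below -/
import Mathlib

section
/- Let Ψ : ℝ → ℝ be a non-constant C² solution of Ψ''(t) + (n−2)Ψ'(t) − 2𝔢·sin(Ψ(t))·cos(Ψ(t)) = 0 with n ≥ 3, 𝔢 > 0, and suppose lim_{t→−∞} Ψ'(t) = 0 and lim_{t→−∞} sin(Ψ(t)) = 0. Then there is no t₀ ∈ ℝ with Ψ(t₀) ∈ πℤ; consequently there exists k₀ ∈ ℤ with k₀π < Ψ(t) < (k₀+1)π for all t. -/
open Real Filter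

/-- `sin` is `1`-Lipschitz, pointwise form. -/
lemma sin_lip_aux (a b : ℝ) : |Real.sin a - Real.sin b| ≤ |a - b| := by
  rw [Real.sin_sub_sin]
  have h1 := Real.abs_sin_le_abs (x := (a - b) / 2)
  have h2 := Real.abs_cos_le_one ((a + b) / 2)
  have h3 := abs_nonneg ((a - b) / 2)
  have h4 := abs_nonneg (Real.sin ((a - b) / 2))
  have h5 := abs_nonneg (Real.cos ((a + b) / 2))
  have h6 : |2 * Real.sin ((a - b) / 2) * Real.cos ((a + b) / 2)|
      = 2 * |Real.sin ((a - b) / 2)| * |Real.cos ((a + b) / 2)| := by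
    rw [abs_mul, abs_mul]; norm_num
  have habs : |a - b| = 2 * |(a - b) / 2| := by rw [abs_div, abs_two]; ring
  rw [h6, habs]
  nlinarith

/-- A non-constant finite-energy solution never takes values in `πℤ`,
and hence stays in an open strip `(k₀π, (k₀+1)π)`. -/
theorem stmt3 (n : ℕ) (hn : 3 ≤ n) (e : ℝ) (he : 0 < e)
    (Ψ : ℝ → ℝ) (hΨ : ContDiff ℝ 2 Ψ)
    (hODE : ∀ t : ℝ,
      deriv (deriv Ψ) t + ((n : ℝ) - 2) * deriv Ψ t
        - 2 * e * Real.sin (Ψ t) * Real.cos (Ψ t) = 0)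
    (hnc : ∃ a b : ℝ, Ψ a ≠ Ψ b)
    (hlim1 : Tendsto (deriv Ψ) atBot (nhds 0))
    (hlim2 : Tendsto (fun t => Real.sin (Ψ t)) atBot (nhds 0)) :
    (∀ t₀ : ℝ, ∀ k : ℤ, Ψ t₀ ≠ (k : ℝ) * Real.pi) ∧
      ∃ k₀ : ℤ, ∀ t : ℝ,
        (k₀ : ℝ) * Real.pi < Ψ t ∧ Ψ t < ((k₀ : ℝ) + 1) * Real.pi := by
  have hπ := Real.pi_pos
  have hn3 : (3:ℝ) ≤ (n:ℝ) := by exact_mod_cast hn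
  have hn2 : (1:ℝ) ≤ (n:ℝ) - 2 := by linarith
  have hΨ1 : Differentiable ℝ Ψ := hΨ.differentiable (by norm_num)
  have hΨ2 : Differentiable ℝ (deriv Ψ) := by
    have h : ContDiff ℝ ((1:ℕ) + 1) Ψ := by exact_mod_cast hΨ
    rw [contDiff_succ_iff_deriv] at h
    exact h.2.2.differentiable (by norm_num)
  -- the Lyapunov function is nonpositive
  have hVle : ∀ t, deriv Ψ t * deriv Ψ t
      - 2 * e * (Real.sin (Ψ t) * Real.sin (Ψ t)) ≤ 0 := by
    set V : ℝ → ℝ := fun t =>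
      deriv Ψ t * deriv Ψ t - 2 * e * (Real.sin (Ψ t) * Real.sin (Ψ t)) with hVdef
    have hV : ∀ t, HasDerivAt V (-(2 * ((n:ℝ) - 2)) * (deriv Ψ t * deriv Ψ t)) t := by
      intro t
      have h1 : HasDerivAt Ψ (deriv Ψ t) t := (hΨ1 t).hasDerivAt
      have h2 : HasDerivAt (deriv Ψ) (deriv (deriv Ψ) t) t := (hΨ2 t).hasDerivAt
      have h3 : HasDerivAt (fun s => Real.sin (Ψ s)) (Real.cos (Ψ t) * deriv Ψ t) t :=
        (Real.hasDerivAt_sin (Ψ t)).comp t h1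
      have h4 := (h2.mul h2).sub ((h3.mul h3).const_mul (2 * e))
      refine h4.congr_deriv ?_
      linear_combination (2 * deriv Ψ t) * hODE t
    have hVdiff : Differentiable ℝ V := fun t => (hV t).differentiableAt
    have hanti : Antitone V := by
      apply antitone_of_deriv_nonpos hVdiff
      intro t
      rw [(hV t).deriv]
      nlinarith [mul_self_nonneg (deriv Ψ t)]
    have hVlim : Tendsto V atBot (nhds 0) := by
      have h := (hlim1.mul hlim1).sub ((hlim2.mul hlim2).const_mul (2 * e))
      simpa using h
    intro t
    refine ge_of_tendsto hVlim ?_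
    filter_upwards [eventually_le_atBot t] with s hs
    exact hanti hs
  -- Part 1: the solution never hits πℤ
  have key : ∀ t₀ : ℝ, ∀ k : ℤ, Ψ t₀ ≠ (k : ℝ) * Real.pi := by
    intro t₀ k h
    have hsin0 : Real.sin (Ψ t₀) = 0 := by rw [h]; exact Real.sin_int_mul_pi k
    have hd0 : deriv Ψ t₀ = 0 := by
      have h1 := hVle t₀
      rw [hsin0] at h1
      nlinarith [mul_self_nonneg (deriv Ψ t₀)]
    -- set up the first-order system and its Lipschitz vector field
    set v : ℝ → ℝ × ℝ → ℝ × ℝ := fun _ p =>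
      (p.2, 2 * e * Real.sin p.1 * Real.cos p.1 - ((n:ℝ) - 2) * p.2) with hvdef
    have hKco : ((2 * e + 2 * (n:ℝ)).toNNReal : ℝ) = 2 * e + 2 * (n:ℝ) :=
      Real.coe_toNNReal _ (by positivity)
    have hlip : ∀ s : ℝ, LipschitzWith ((2 * e + 2 * (n:ℝ)).toNNReal) (v s) := by
      intro s
      apply LipschitzWith.of_dist_le_mul
      rintro ⟨a1, a2⟩ ⟨b1, b2⟩
      rw [hKco]
      simp only [hvdef, Prod.dist_eq, Real.dist_eq]
      have hM1 : |a1 - b1| ≤ max |a1 - b1| |a2 - b2| := le_max_left _ _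
      have hM2 : |a2 - b2| ≤ max |a1 - b1| |a2 - b2| := le_max_right _ _
      have hM0 : (0:ℝ) ≤ max |a1 - b1| |a2 - b2| := le_trans (abs_nonneg _) hM1
      apply max_le
      · nlinarith
      · have h2a : 2 * e * Real.sin a1 * Real.cos a1 = e * Real.sin (2 * a1) := by
          rw [Real.sin_two_mul]; ring
        have h2b : 2 * e * Real.sin b1 * Real.cos b1 = e * Real.sin (2 * b1) := by
          rw [Real.sin_two_mul]; ring
        rw [h2a, h2b]
        have htri : |e * Real.sin (2 * a1) - ((n:ℝ) - 2) * a2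
            - (e * Real.sin (2 * b1) - ((n:ℝ) - 2) * b2)|
            ≤ |e * Real.sin (2 * a1) - e * Real.sin (2 * b1)|
              + |((n:ℝ) - 2) * a2 - ((n:ℝ) - 2) * b2| := by
          have := abs_sub (e * Real.sin (2 * a1) - e * Real.sin (2 * b1))
            (((n:ℝ) - 2) * a2 - ((n:ℝ) - 2) * b2)
          calc |e * Real.sin (2 * a1) - ((n:ℝ) - 2) * a2
              - (e * Real.sin (2 * b1) - ((n:ℝ) - 2) * b2)|
              = |(e * Real.sin (2 * a1) - e * Real.sin (2 * b1))
                - (((n:ℝ) - 2) * a2 - ((n:ℝ) - 2) * b2)| := by ring_nf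
            _ ≤ _ := this
        have hX : |e * Real.sin (2 * a1) - e * Real.sin (2 * b1)| ≤ e * (2 * |a1 - b1|) := by
          rw [← mul_sub, abs_mul, abs_of_pos he]
          have hs := sin_lip_aux (2 * a1) (2 * b1)
          have h2 : |2 * a1 - 2 * b1| = 2 * |a1 - b1| := by
            rw [show 2 * a1 - 2 * b1 = 2 * (a1 - b1) by ring, abs_mul, abs_two]
          rw [h2] at hs
          nlinarith
        have hY : |((n:ℝ) - 2) * a2 - ((n:ℝ) - 2) * b2| = ((n:ℝ) - 2) * |a2 - b2| := by
          rw [← mul_sub, abs_mul, abs_of_nonneg (by linarith : (0:ℝ) ≤ (n:ℝ) - 2)]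
        rw [hY] at htri
        nlinarith [abs_nonneg (a2 - b2)]
    -- both Ψ and the constant kπ solve the system with the same data at t₀
    have hf' : ∀ s : ℝ, HasDerivAt (fun u => (Ψ u, deriv Ψ u)) (v s (Ψ s, deriv Ψ s)) s := by
      intro s
      have h1 : HasDerivAt Ψ (deriv Ψ s) s := (hΨ1 s).hasDerivAt
      have h2 : HasDerivAt (deriv Ψ) (deriv (deriv Ψ) s) s := (hΨ2 s).hasDerivAt
      have h12 := h1.prodMk h2
      convert h12 using 1
      simp only [hvdef]
      refine Prod.ext rfl ?_
      have := hODE s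
      simp only
      linarith
    have hg' : ∀ s : ℝ, HasDerivAt (fun _ : ℝ => (((k:ℝ) * Real.pi, (0:ℝ)) : ℝ × ℝ))
        (v s ((k:ℝ) * Real.pi, 0)) s := by
      intro s
      have hz : v s ((k:ℝ) * Real.pi, 0) = (0 : ℝ × ℝ) := by
        simp only [hvdef]
        refine Prod.ext rfl ?_
        simp [Real.sin_int_mul_pi k]
      rw [hz]
      exact hasDerivAt_const s _
    have hconst : ∀ t : ℝ, Ψ t = (k:ℝ) * Real.pi := by
      intro t
      have hlo1 : min t t₀ - 1 < t₀ := by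
        have := min_le_right t t₀; linarith
      have hhi1 : t₀ < max t t₀ + 1 := by
        have := le_max_right t t₀; linarith
      have hlo2 : min t t₀ - 1 ≤ t := by
        have := min_le_left t t₀; linarith
      have hhi2 : t ≤ max t t₀ + 1 := by
        have := le_max_left t t₀; linarith
      have heqOn := ODE_solution_unique_of_mem_Icc (v := v) (s := fun _ => Set.univ)
        (K := (2 * e + 2 * (n:ℝ)).toNNReal)
        (fun s _ => (hlip s).lipschitzOnWith)
        (Set.mem_Ioo.mpr ⟨hlo1, hhi1⟩)
        ((hΨ1.continuous.prodMk hΨ2.continuous).continuousOn)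
        (fun s _ => hf' s) (fun _ _ => trivial)
        continuousOn_const
        (fun s _ => hg' s) (fun _ _ => trivial)
        (by rw [h, hd0])
      have := heqOn (Set.mem_Icc.mpr ⟨hlo2, hhi2⟩)
      exact congrArg Prod.fst this
    obtain ⟨a, b, hab⟩ := hnc
    rw [hconst a, hconst b] at hab
    exact hab rfl
  -- Part 2: confinement to a strip via the intermediate value theorem
  refine ⟨key, ?_⟩
  set k₀ := ⌊Ψ 0 / Real.pi⌋ with hk₀
  have h0lo : (k₀:ℝ) * Real.pi < Ψ 0 := by
    have h1 : (k₀:ℝ) ≤ Ψ 0 / Real.pi := Int.floor_le _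
    have h2 : (k₀:ℝ) * Real.pi ≤ Ψ 0 := by
      rw [← le_div_iff₀ hπ]; exact h1
    exact lt_of_le_of_ne h2 (fun hEq => key 0 k₀ hEq.symm)
  have h0hi : Ψ 0 < ((k₀:ℝ) + 1) * Real.pi := by
    have h1 : Ψ 0 / Real.pi < (k₀:ℝ) + 1 := Int.lt_floor_add_one _
    calc Ψ 0 = Ψ 0 / Real.pi * Real.pi := by field_simp
      _ < ((k₀:ℝ) + 1) * Real.pi := mul_lt_mul_of_pos_right h1 hπ
  refine ⟨k₀, fun t => ⟨?_, ?_⟩⟩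
  · by_contra hcon
    push_neg at hcon
    have hmem : (k₀:ℝ) * Real.pi ∈ Set.uIcc (Ψ t) (Ψ 0) := by
      rw [Set.mem_uIcc]; left; exact ⟨hcon, h0lo.le⟩
    obtain ⟨s, _, hs⟩ := intermediate_value_uIcc hΨ1.continuous.continuousOn hmem
    exact key s k₀ hs
  · by_contra hcon
    push_neg at hcon
    have hmem : ((k₀:ℝ) + 1) * Real.pi ∈ Set.uIcc (Ψ 0) (Ψ t) := by
      rw [Set.mem_uIcc]; left; exact ⟨h0hi.le, hcon⟩
    obtain ⟨s, _, hs⟩ := intermediate_value_uIcc hΨ1.continuous.continuousOn hmem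
    have : Ψ s = ((k₀ + 1 : ℤ) : ℝ) * Real.pi := by push_cast; exact hs
    exact key s (k₀ + 1) this
end

section
/- For any ρ ∈ [0, π) and k ≥ 1, the function Φ(r) = 2·arctan(r^k · tan(ρ/2)) on [0,1] satisfies Φ(0) = 0, Φ(1) = ρ, and solves Φ''(r) + Φ'(r)/r − k²·sin(Φ(r))cos(Φ(r))/r² = 0 for r ∈ (0,1]. -/
open Real

/-- The explicit solution of the Dirichlet problem for `n = 2`:
`Φ(r) = 2 arctan (r^k tan(ρ/2))` has the right boundary values and solves the ODE. -/
theorem stmt8 (ρ : ℝ) (hρ : ρ ∈ Set.Ico 0 Real.pi) (k : ℕ) (hk : 1 ≤ k)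
    (Φ : ℝ → ℝ) (hΦ : ∀ r, Φ r = 2 * Real.arctan (r ^ k * Real.tan (ρ / 2))) :
    Φ 0 = 0 ∧ Φ 1 = ρ ∧
      ∀ r ∈ Set.Ioc (0 : ℝ) 1,
        deriv (deriv Φ) r + deriv Φ r / r
          - (k : ℝ) ^ 2 * Real.sin (Φ r) * Real.cos (Φ r) / r ^ 2 = 0 := by
  obtain ⟨hρ0, hρπ⟩ := hρ
  obtain ⟨m, rfl⟩ : ∃ m, k = m + 1 := ⟨k - 1, by omega⟩
  set t := Real.tan (ρ / 2) with ht
  have hΦfun : Φ = fun r => 2 * Real.arctan (r ^ (m + 1) * t) := funext hΦ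
  have h0 : Φ 0 = 0 := by
    rw [hΦ]; simp
  have h1 : Φ 1 = ρ := by
    rw [hΦ]
    simp only [one_pow, one_mul]
    rw [ht, Real.arctan_tan (by linarith [Real.pi_pos]) (by linarith)]
    ring
  refine ⟨h0, h1, ?_⟩
  intro r hr
  obtain ⟨hr0, hr1⟩ := hr
  have hr0' : r ≠ 0 := ne_of_gt hr0
  -- first derivative
  have hd1 : ∀ x : ℝ, HasDerivAt Φ
      (2 * (((m : ℝ) + 1) * x ^ m * t / (1 + (x ^ (m + 1) * t) ^ 2))) x := by
    intro x
    rw [hΦfun]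
    have h1 : HasDerivAt (fun y : ℝ => y ^ (m + 1) * t)
        (((m : ℝ) + 1) * x ^ m * t) x := by
      simpa using (hasDerivAt_pow (m + 1) x).mul_const t
    have h2 := (Real.hasDerivAt_arctan (x ^ (m + 1) * t)).comp x h1
    convert h2.const_mul 2 using 1
    · rfl
    · rfl
    · rfl
    · ring
  have hderiv : deriv Φ = fun x => 2 * (((m : ℝ) + 1) * x ^ m * t / (1 + (x ^ (m + 1) * t) ^ 2)) :=
    funext fun x => (hd1 x).deriv
  -- second derivative
  have hu : HasDerivAt (fun x : ℝ => x ^ (m + 1) * t) (((m : ℝ) + 1) * r ^ m * t) r := by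
    simpa using (hasDerivAt_pow (m + 1) r).mul_const t
  have hDn : HasDerivAt (fun x : ℝ => 1 + (x ^ (m + 1) * t) ^ 2)
      (2 * (r ^ (m + 1) * t) * (((m : ℝ) + 1) * r ^ m * t)) r := by
    have := (hu.pow 2).const_add 1
    simpa [mul_comm, mul_assoc, mul_left_comm] using this
  have hN : HasDerivAt (fun x : ℝ => ((m : ℝ) + 1) * x ^ m * t)
      (((m : ℝ) + 1) * ((m : ℝ) * r ^ (m - 1)) * t) r :=
    ((hasDerivAt_pow m r).const_mul ((m : ℝ) + 1)).mul_const t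
  have hDnne : (1 + (r ^ (m + 1) * t) ^ 2) ≠ 0 := by positivity
  have hd2 : HasDerivAt (fun x => 2 * (((m : ℝ) + 1) * x ^ m * t / (1 + (x ^ (m + 1) * t) ^ 2)))
      (2 * ((((m : ℝ) + 1) * ((m : ℝ) * r ^ (m - 1)) * t * (1 + (r ^ (m + 1) * t) ^ 2)
        - ((m : ℝ) + 1) * r ^ m * t * (2 * (r ^ (m + 1) * t) * (((m : ℝ) + 1) * r ^ m * t)))
        / (1 + (r ^ (m + 1) * t) ^ 2) ^ 2)) r :=
    (hN.div hDn hDnne).const_mul 2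
  -- sin and cos of Φ
  set u := r ^ (m + 1) * t with hu'
  have hSpos : (0 : ℝ) < 1 + u ^ 2 := by positivity
  have hs : Real.sqrt (1 + u ^ 2) * Real.sqrt (1 + u ^ 2) = 1 + u ^ 2 :=
    Real.mul_self_sqrt (by positivity)
  have hsin : Real.sin (2 * Real.arctan u) = 2 * u / (1 + u ^ 2) := by
    rw [Real.sin_two_mul, Real.sin_arctan, Real.cos_arctan]
    have hsne : Real.sqrt (1 + u ^ 2) ≠ 0 := by positivity
    field_simp
    rw [Real.sq_sqrt hSpos.le]
  have hcos : Real.cos (2 * Real.arctan u) = (1 - u ^ 2) / (1 + u ^ 2) := by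
    rw [Real.cos_two_mul, Real.cos_arctan, div_pow, one_pow, Real.sq_sqrt (by positivity)]
    field_simp
    ring
  have hm : (m : ℝ) * r ^ (m - 1) = (m : ℝ) * r ^ m / r := by
    rcases Nat.eq_zero_or_pos m with hm0 | hm1
    · simp [hm0]
    · rw [eq_div_iff hr0', mul_assoc, ← pow_succ]
      congr 2
      omega
  rw [hderiv]
  simp only []
  rw [hd2.deriv, hΦ, hsin, hcos, hm]
  push_cast
  field_simp
  ring
end

section
/- Let Ψ : ℝ → ℝ solve Ψ'' + (n−2)Ψ' − 2𝔢 sin Ψ cos Ψ = 0 with n ≥ 3, 𝔢 > 0, 0 < Ψ(t) < π for all t, lim_{t→−∞}(Ψ(t),Ψ'(t)) = (0,0), and suppose (Ψ(t),Ψ'(t)) converges as t → +∞ to an equilibrium of the system. Then lim_{t→∞}(Ψ(t),Ψ'(t)) = (π/2, 0). -/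
open Real Filter

/-- A solution in the strip `0 < Ψ < π` emanating from `(0,0)` which converges to an
equilibrium as `t → ∞` must converge to `(π/2, 0)`. -/
theorem stmt16 (n : ℕ) (hn : 3 ≤ n) (e : ℝ) (he : 0 < e)
    (Ψ : ℝ → ℝ) (hΨ : ContDiff ℝ 2 Ψ)
    (hODE : ∀ t : ℝ,
      deriv (deriv Ψ) t + ((n : ℝ) - 2) * deriv Ψ t
        - 2 * e * Real.sin (Ψ t) * Real.cos (Ψ t) = 0)
    (hstrip : ∀ t : ℝ, 0 < Ψ t ∧ Ψ t < Real.pi)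
    (hbot : Tendsto (fun t => (Ψ t, deriv Ψ t)) atBot (nhds ((0 : ℝ), (0 : ℝ))))
    (htop : ∃ P : ℝ × ℝ,
      (P.2 = 0 ∧ Real.sin P.1 * Real.cos P.1 = 0) ∧
      Tendsto (fun t => (Ψ t, deriv Ψ t)) atTop (nhds P)) :
    Tendsto (fun t => (Ψ t, deriv Ψ t)) atTop (nhds ((Real.pi / 2 : ℝ), (0 : ℝ))) := by
  obtain ⟨P, ⟨hP2, hPsc⟩, hT⟩ := htop
  -- regularity
  have hreg := (contDiff_succ_iff_deriv (n := 1)).mp (hΨ.of_le (by norm_num))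
  have hΨd : Differentiable ℝ Ψ := hreg.1
  have hdΨd : Differentiable ℝ (deriv Ψ) := hreg.2.2.differentiable one_ne_zero
  -- the Lyapunov function
  set g : ℝ → ℝ := deriv Ψ with hg
  set V : ℝ → ℝ := fun t => (g t) ^ 2 - 2 * e * (Real.sin (Ψ t)) ^ 2 with hV
  -- derivative of V
  have hVD : ∀ t, HasDerivAt V (-2 * ((n : ℝ) - 2) * (g t) ^ 2) t := by
    intro t
    have h1 : HasDerivAt Ψ (g t) t := hΨd.differentiableAt.hasDerivAt
    have h2 : HasDerivAt g (deriv g t) t := hdΨd.differentiableAt.hasDerivAt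
    have h3 : HasDerivAt (fun s => Real.sin (Ψ s)) (Real.cos (Ψ t) * g t) t :=
      (Real.hasDerivAt_sin (Ψ t)).comp t h1
    have h4 : HasDerivAt V
        (2 * g t * deriv g t - 2 * e * (2 * Real.sin (Ψ t) * (Real.cos (Ψ t) * g t))) t := by
      have := ((h2.fun_pow 2).sub (((h3.fun_pow 2)).const_mul (2 * e)))
      exact this.congr_deriv (by push_cast; ring)
    have hode := hODE t
    have hderiv : deriv g t = -((n : ℝ) - 2) * g t + 2 * e * Real.sin (Ψ t) * Real.cos (Ψ t) := by
      rw [hg]; linarith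
    convert h4 using 1
    rw [hderiv]; ring
  have hVd : Differentiable ℝ V := fun t => (hVD t).differentiableAt
  have hVanti : Antitone V := by
    refine antitone_of_deriv_nonpos hVd fun t => ?_
    rw [(hVD t).deriv]
    have : (0:ℝ) ≤ (n : ℝ) - 2 := by
      have : (3:ℝ) ≤ (n:ℝ) := by exact_mod_cast hn
      linarith
    nlinarith [sq_nonneg (g t)]
  -- V tends to 0 at -∞
  have hF : Continuous (fun p : ℝ × ℝ => p.2 ^ 2 - 2 * e * (Real.sin p.1) ^ 2) :=
    (continuous_snd.pow 2).sub
      (continuous_const.mul ((Real.continuous_sin.comp continuous_fst).pow 2))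
  have hVbot : Tendsto V atBot (nhds 0) := by
    have := (hF.tendsto ((0:ℝ), (0:ℝ))).comp hbot
    simpa [Function.comp_def] using this
  -- V tends to -2 e sin² P.1 at +∞
  have hVtop : Tendsto V atTop (nhds (-(2 * e * (Real.sin P.1) ^ 2))) := by
    have := (hF.tendsto P).comp hT
    simpa [hP2, Function.comp_def] using this
  -- V ≤ 0 everywhere
  have hVle : ∀ t, V t ≤ 0 := by
    intro t
    refine ge_of_tendsto hVbot ?_
    filter_upwards [eventually_le_atBot t] with s hs
    exact hVanti hs
  -- limit at +∞ is ≤ V t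
  have hVinf_le : ∀ t, -(2 * e * (Real.sin P.1) ^ 2) ≤ V t := by
    intro t
    refine le_of_tendsto hVtop ?_
    filter_upwards [eventually_ge_atTop t] with s hs
    exact hVanti hs
  -- sin P.1 ≠ 0
  have hsinP : Real.sin P.1 ≠ 0 := by
    intro h0
    have hV0 : ∀ t, V t = 0 := fun t => le_antisymm (hVle t)
      (by have := hVinf_le t; rw [h0] at this; simpa using this)
    -- then deriv V = 0 so g = 0, so sin (Ψ t) = 0, contradiction
    have hdV0 : ∀ t, deriv V t = 0 := by
      intro t
      have : V = fun _ => (0:ℝ) := funext hV0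
      rw [this]; simp
    have hg0 : ∀ t, g t = 0 := by
      intro t
      have h := (hVD t).deriv
      rw [hdV0 t] at h
      have hn2 : (0:ℝ) < (n : ℝ) - 2 := by
        have : (3:ℝ) ≤ (n:ℝ) := by exact_mod_cast hn
        linarith
      have hsq : g t ^ 2 = 0 := by nlinarith [sq_nonneg (g t)]
      exact pow_eq_zero_iff two_ne_zero |>.mp hsq
    have this0 : (g 0) ^ 2 - 2 * e * Real.sin (Ψ 0) ^ 2 = 0 := hV0 0
    rw [hg0 0] at this0
    have hsin : Real.sin (Ψ 0) ^ 2 = 0 := by nlinarith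
    have hpos : 0 < Real.sin (Ψ 0) :=
      Real.sin_pos_of_pos_of_lt_pi (hstrip 0).1 (hstrip 0).2
    nlinarith
  have hcosP : Real.cos P.1 = 0 := by
    rcases mul_eq_zero.mp hPsc with h | h
    · exact absurd h hsinP
    · exact h
  -- P.1 ∈ [0, π]
  have hTΨ : Tendsto Ψ atTop (nhds P.1) := by
    have := (continuous_fst.tendsto P).comp hT
    simpa [Function.comp_def] using this
  have hP1mem : P.1 ∈ Set.Icc 0 Real.pi := by
    constructor
    · exact ge_of_tendsto hTΨ (Eventually.of_forall fun t => (hstrip t).1.le)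
    · exact le_of_tendsto hTΨ (Eventually.of_forall fun t => (hstrip t).2.le)
  have hP1 : P.1 = Real.pi / 2 := by
    have hmem2 : Real.pi / 2 ∈ Set.Icc 0 Real.pi := by
      constructor <;> nlinarith [Real.pi_pos]
    exact Real.injOn_cos hP1mem hmem2 (by rw [hcosP, Real.cos_pi_div_two])
  have hP : P = ((Real.pi / 2 : ℝ), (0 : ℝ)) := Prod.ext hP1 hP2
  rwa [hP] at hT
end
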